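/- Let (V, l_∗, r_∗) be a representation of an anti-Zinbiel algebra (A, ∗). Then (V*, l_∗* + r_∗*, -r_∗*) is also a representation of (A, ∗), where for a linear map f: A → End(V), f*: A → End(V*) is defined by ⟨f*(x)u*, v⟩ = -⟨u*, f(x)v⟩. -/
import Mathlib


/-- A representation `(V, l, r)` of an anti-Zinbiel algebra `(A, ∗)` (multiplication in
`Module.End` is composition; `l⋆ = l + r`). -/
def IsAZRep {k A V : Type*} [Field k] [AddCommGroup A] [Module k A]
    [AddCommGroup V] [Module k V]
    (s : A →ₗ[k] A →ₗ[k] A) (l r : A → Module.End k V) : Prop :=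
  IsLinearMap k l ∧ IsLinearMap k r ∧
  (∀ x y, l x * l y = - l (s x y + s y x)) ∧
  (∀ x y, l x * l y = - (r x * (l y + r y))) ∧
  (∀ x y, l x * l y = r (s y x)) ∧
  (∀ x y, l x * r y = - (r y * (l x + r x))) ∧
  (∀ x y, l x * r y = - (r x * (l y + r y))) ∧
  (∀ x y, l x * r y = l y * r x) ∧
  (∀ x y, r (s x y) = l x * r y) ∧
  (∀ x y, l y * l x = l x * l y)


/-- the dual representation `(V*, l* + r*, -r*)` of a representation of an
anti-Zinbiel algebra, where `f*(x) = -(f x).dualMap`. -/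
theorem azRep_dual {k A V : Type*} [Field k] [AddCommGroup A] [Module k A]
    [AddCommGroup V] [Module k V]
    (s : A →ₗ[k] A →ₗ[k] A) (l r : A → Module.End k V)
    (h : IsAZRep s l r) :
    IsAZRep (V := Module.Dual k V) s
      (fun x => -((l x).dualMap) - (r x).dualMap)
      (fun x => (r x).dualMap) := by
  obtain ⟨hl, hr, h1, h2, h3, h4, h5, h6, h7, h8⟩ := h
  -- key primal identities
  have key : ∀ x y, l x * l y = l x * r y := by
    intro x y
    rw [← h7, ← h3 y x]
    exact h8 y x
  have keyll : ∀ x y, (l y + r y) * (l x + r x) = l y * l x := by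
    intro x y
    have e : r y * (l x + r x) = -(l x * r y) := by
      rw [h4 x y, neg_neg]
    calc (l y + r y) * (l x + r x)
        = (l y * l x + l y * r x) + r y * (l x + r x) := by rw [add_mul, mul_add]
      _ = (l y * l x + l y * r x) + -(l x * r y) := by rw [e]
      _ = l y * l x := by rw [h6 x y]; abel
  have hsum : ∀ x y, l (s x y + s y x) + r (s x y + s y x) = l y * l x := by
    intro x y
    have hr2 : r (s x y + s y x) = l x * r y + l y * r x := by
      rw [hr.map_add, h7, h7]
    have e2 : l x * r y + l y * r x = l x * l y + l y * l x := by
      rw [← key x y, ← key y x]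
    rw [hr2, e2, h8 x y, h1 x y]
    abel
  have pt : ∀ {f g : Module.End k V}, f = g →
      ∀ (φ : Module.Dual k V) (v : V), φ (f v) = φ (g v) := by
    rintro f g rfl φ v; rfl
  refine ⟨?_, ?_, ?_, ?_, ?_, ?_, ?_, ?_, ?_, ?_⟩
  · constructor
    · intro x y
      ext φ v
      simp [hl.map_add, hr.map_add]
      ring
    · intro c x
      ext φ v
      simp [hl.map_smul, hr.map_smul]
      ring
  · constructor
    · intro x y
      ext φ v
      simp [hr.map_add]
    · intro c x
      ext φ v
      simp [hr.map_smul]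
  · -- axiom 1
    intro x y
    have E : (l y + r y) * (l x + r x)
        = l (s x y + s y x) + r (s x y + s y x) :=
      (keyll x y).trans (hsum x y).symm
    ext φ v
    have H := pt E φ v
    simp only [Module.End.mul_apply, LinearMap.add_apply, LinearMap.sub_apply,
      LinearMap.neg_apply, map_add, map_neg, LinearMap.dualMap_apply] at H ⊢
    linear_combination H
  · -- axiom 2
    intro x y
    have E : (l y + r y) * (l x + r x) = l y * r x :=
      (keyll x y).trans (key y x)
    ext φ v
    have H := pt E φ v
    simp only [Module.End.mul_apply, LinearMap.add_apply, LinearMap.sub_apply,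
      LinearMap.neg_apply, map_add, map_neg, LinearMap.dualMap_apply] at H ⊢
    linear_combination H
  · -- axiom 3
    intro x y
    have E : (l y + r y) * (l x + r x) = r (s y x) :=
      (keyll x y).trans ((h8 x y).trans (h3 x y))
    ext φ v
    have H := pt E φ v
    simp only [Module.End.mul_apply, LinearMap.add_apply, LinearMap.sub_apply,
      LinearMap.neg_apply, map_add, map_neg, LinearMap.dualMap_apply] at H ⊢
    linear_combination H
  · -- axiom 4
    intro x y
    have E : r y * (l x + r x) = -(l x * r y) := by rw [h4 x y, neg_neg]
    ext φ v
    have H := pt E φ v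
    simp only [Module.End.mul_apply, LinearMap.add_apply, LinearMap.sub_apply,
      LinearMap.neg_apply, map_add, map_neg, LinearMap.dualMap_apply] at H ⊢
    linear_combination -H
  · -- axiom 5
    intro x y
    have E : r y * (l x + r x) = -(l y * r x) := by
      rw [← h6 x y, h4 x y, neg_neg]
    ext φ v
    have H := pt E φ v
    simp only [Module.End.mul_apply, LinearMap.add_apply, LinearMap.sub_apply,
      LinearMap.neg_apply, map_add, map_neg, LinearMap.dualMap_apply] at H ⊢
    linear_combination -H
  · -- axiom 6
    intro x y
    have E : r y * (l x + r x) = r x * (l y + r y) := by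
      rw [← neg_neg (r y * (l x + r x)), ← h4 x y, h5 x y, neg_neg]
    ext φ v
    have H := pt E φ v
    simp only [Module.End.mul_apply, LinearMap.add_apply, LinearMap.sub_apply,
      LinearMap.neg_apply, map_add, map_neg, LinearMap.dualMap_apply] at H ⊢
    linear_combination -H
  · -- axiom 7
    intro x y
    have E : r (s x y) = -(r y * (l x + r x)) := (h7 x y).trans (h4 x y)
    ext φ v
    have H := pt E φ v
    simp only [Module.End.mul_apply, LinearMap.add_apply, LinearMap.sub_apply,
      LinearMap.neg_apply, map_add, map_neg, LinearMap.dualMap_apply] at H ⊢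
    linear_combination H
  · -- axiom 8
    intro x y
    have E : (l x + r x) * (l y + r y) = (l y + r y) * (l x + r x) :=
      (keyll y x).trans ((h8 x y).symm.trans (keyll x y).symm)
    ext φ v
    have H := pt E φ v
    simp only [Module.End.mul_apply, LinearMap.add_apply, LinearMap.sub_apply,
      LinearMap.neg_apply, map_add, map_neg, LinearMap.dualMap_apply] at H ⊢
    linear_combination H
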